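/- With a polarisation V = I ⊕ E, pure spinor v_I, and spinor norm B as above, write e_K = e_{k_1}···e_{k_p} for an ordered subset K = {k_1,...,k_p} ⊆ {1,...,n}. Then B(e_K · v_I, e_J · v_I) ≠ 0 implies K ∩ J = ∅ and K ∪ J = {1,...,n} (i.e., J = K^c); moreover B(v_I, e_1 e_2 ··· e_n · v_I) ≠ 0. -/

import Mathlib

open CliffordAlgebra

/-- The ordered product `e_{k₁} ⋯ e_{k_p}` in the Clifford algebra, for a
subset `K = {k₁ < ⋯ < k_p}` of `{1, …, n}`. -/
def prodE {k V : Type*} [Field k] [AddCommGroup V] [Module k V] {n : ℕ}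
    (Q : QuadraticForm k V) (eB : Fin n → V) (P : Finset (Fin n)) :
    CliffordAlgebra Q :=
  ((P.sort (· ≤ ·)).map fun p => ι Q (eB p)).prod

section Aux

variable {k V : Type*} [Field k] [AddCommGroup V] [Module k V]
variable {n : ℕ} (Q : QuadraticForm k V) (eB : Fin n → V)

/-- Product of `ι Q (eB p)` over a list of indices. -/
def xp (L : List (Fin n)) : CliffordAlgebra Q :=
  (L.map fun p => ι Q (eB p)).prod

lemma xp_nil : xp Q eB [] = 1 := rfl

lemma xp_cons (a : Fin n) (L : List (Fin n)) :
    xp Q eB (a :: L) = ι Q (eB a) * xp Q eB L := by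
  simp [xp]

lemma prodE_eq (P : Finset (Fin n)) : prodE Q eB P = xp Q eB (P.sort (· ≤ ·)) := rfl

variable (hxx : ∀ a b, ι Q (eB a) * ι Q (eB b) = - (ι Q (eB b) * ι Q (eB a)))
variable (hxsq : ∀ a, ι Q (eB a) * ι Q (eB a) = 0)

include hxx hxsq in
lemma memMul : ∀ (L : List (Fin n)) (a : Fin n), a ∈ L →
    ι Q (eB a) * xp Q eB L = 0 := by
  intro L
  induction L with
  | nil => intro a h; simp at h
  | cons b L ih =>
    intro a h
    rcases eq_or_ne a b with rfl | hne
    · rw [xp_cons, ← mul_assoc, hxsq, zero_mul]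
    · have haL : a ∈ L := by
        rcases List.mem_cons.mp h with h1 | h1
        · exact absurd h1 hne
        · exact h1
      rw [xp_cons, ← mul_assoc, hxx a b, neg_mul, mul_assoc, ih a haL,
        mul_zero, neg_zero]

include hxx hxsq in
lemma dupZero : ∀ L : List (Fin n), ¬ L.Nodup → xp Q eB L = 0 := by
  intro L
  induction L with
  | nil => intro h; exact absurd List.nodup_nil h
  | cons a L ih =>
    intro h
    rw [List.nodup_cons] at h
    push_neg at h
    by_cases ha : a ∈ L
    · rw [xp_cons]; exact memMul Q eB hxx hxsq L a ha
    · rw [xp_cons, ih (h ha), mul_zero]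

include hxx in
lemma permSign : ∀ {L L' : List (Fin n)}, L.Perm L' →
    xp Q eB L = xp Q eB L' ∨ xp Q eB L = - xp Q eB L' := by
  intro L L' h
  induction h with
  | nil => left; rfl
  | cons a h ih =>
    rcases ih with h1 | h1
    · left; rw [xp_cons, xp_cons, h1]
    · right; rw [xp_cons, xp_cons, h1, mul_neg]
  | swap a b l =>
    right
    rw [xp_cons, xp_cons, xp_cons, xp_cons, ← mul_assoc, ← mul_assoc,
      hxx b a, neg_mul]
  | trans h1 h2 ih1 ih2 =>
    rcases ih1 with h1' | h1' <;> rcases ih2 with h2' | h2'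
    · left; rw [h1', h2']
    · right; rw [h1', h2']
    · right; rw [h1', h2']
    · left; rw [h1', h2', neg_neg]

variable {S : Type*} [AddCommGroup S] [Module k S]
variable (iB : Fin n → V) (ρ : CliffordAlgebra Q ≃ₐ[k] Module.End k S) (v0 : S)

lemma rxp_cons (a : Fin n) (L : List (Fin n)) :
    ρ (xp Q eB (a :: L)) v0 = ρ (ι Q (eB a)) (ρ (xp Q eB L) v0) := by
  rw [xp_cons, map_mul]; rfl

variable (hyx : ∀ a b, ι Q (iB a) * ι Q (eB b)
    = algebraMap k _ (if b = a then 1 else 0) - ι Q (eB b) * ι Q (iB a))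
variable (hv0 : ∀ a, ρ (ι Q (iB a)) v0 = 0)

include hyx hv0 in
lemma yKill : ∀ (L : List (Fin n)) (a : Fin n), a ∉ L →
    ρ (ι Q (iB a)) (ρ (xp Q eB L) v0) = 0 := by
  intro L
  induction L with
  | nil =>
    intro a _
    have : ρ (xp Q eB []) v0 = v0 := by rw [xp_nil, map_one]; rfl
    rw [this]; exact hv0 a
  | cons b L ih =>
    intro a ha
    have hba : ¬ (b = a) := fun h => ha (h ▸ List.mem_cons_self)
    have haL : a ∉ L := fun h => ha (List.mem_cons_of_mem _ h)
    have key : ι Q (iB a) * xp Q eB (b :: L)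
        = - (ι Q (eB b) * (ι Q (iB a) * xp Q eB L)) := by
      rw [xp_cons, ← mul_assoc, hyx a b, if_neg hba, map_zero, zero_sub,
        neg_mul, mul_assoc]
    have h1 : ρ (ι Q (iB a)) (ρ (xp Q eB (b :: L)) v0)
        = ρ (ι Q (iB a) * xp Q eB (b :: L)) v0 := by rw [map_mul]; rfl
    rw [h1, key]
    simp only [map_neg, map_mul, LinearMap.neg_apply, Module.End.mul_apply]
    rw [ih a haL, map_zero, neg_zero]

variable (B : S →ₗ[k] S →ₗ[k] k)

variable (hBe : ∀ (a : Fin n) (φ ψ : S),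
    B (ρ (ι Q (eB a)) φ) ψ = B φ (ρ (ι Q (eB a)) ψ))

include hBe in
lemma Bmove : ∀ (K J : List (Fin n)),
    B (ρ (xp Q eB K) v0) (ρ (xp Q eB J) v0)
      = B v0 (ρ (xp Q eB (K.reverse ++ J)) v0) := by
  intro K
  induction K with
  | nil =>
    intro J
    have : ρ (xp Q eB []) v0 = v0 := by rw [xp_nil, map_one]; rfl
    rw [this, List.reverse_nil, List.nil_append]
  | cons a K ih =>
    intro J
    rw [rxp_cons, hBe, ← rxp_cons, ih (a :: J), List.reverse_cons,
      List.append_assoc, List.singleton_append]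

variable (hv0eq : ∀ a, ρ (ι Q (iB a)) (ρ (ι Q (eB a)) v0) = v0)
variable (hBi : ∀ (a : Fin n) (φ ψ : S),
    B (ρ (ι Q (iB a)) φ) ψ = B φ (ρ (ι Q (iB a)) ψ))

include hyx hv0 hv0eq hBi in
lemma missZero : ∀ (L : List (Fin n)) (a : Fin n), a ∉ L →
    B v0 (ρ (xp Q eB L) v0) = 0 := by
  intro L a ha
  have h1 : B v0 (ρ (xp Q eB L) v0)
      = B (ρ (ι Q (iB a)) (ρ (ι Q (eB a)) v0)) (ρ (xp Q eB L) v0) := by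
    rw [hv0eq a]
  rw [h1, hBi, yKill Q eB iB ρ v0 hyx hv0 L a ha, map_zero]

end Aux

theorem stmt12 {k V S : Type*} [Field k] [AddCommGroup V] [Module k V]
    [FiniteDimensional k V] [AddCommGroup S] [Module k S] [FiniteDimensional k S]
    (n : ℕ)
    (g : LinearMap.BilinForm k V) (Q : QuadraticForm k V)
    (h2 : (2 : k) ≠ 0)
    (hsymm : ∀ v w, g v w = g w v)
    (hdimV : Module.finrank k V = 2 * n)
    (hQ : ∀ v, Q v = g v v)
    -- a polarisation with dual bases
    (iB eB : Fin n → V)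
    (hii : ∀ a b, g (iB a) (iB b) = 0)
    (hee : ∀ a b, g (eB a) (eB b) = 0)
    (hei : ∀ a b, g (eB a) (iB b) = if a = b then (2 : k)⁻¹ else 0)
    (hspan : Submodule.span k (Set.range iB ∪ Set.range eB) = ⊤)
    -- the spinor representation
    (hdimS : Module.finrank k S = 2 ^ n)
    (ρ : CliffordAlgebra Q ≃ₐ[k] Module.End k S)
    -- a pure spinor annihilated by `I`
    (v0 : S) (hv0ne : v0 ≠ 0)
    (hv0 : ∀ a, ρ (ι Q (iB a)) v0 = 0)
    -- a nondegenerate spinor norm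
    (B : S →ₗ[k] S →ₗ[k] k) (hBne : B ≠ 0)
    (hB : ∀ (v : V) (φ ψ : S), B (ρ (ι Q v) φ) ψ = B φ (ρ (ι Q v) ψ))
    (hBndl : ∀ φ, (∀ ψ, B φ ψ = 0) → φ = 0)
    (hBndr : ∀ ψ, (∀ φ, B φ ψ = 0) → ψ = 0) :
    (∀ K J : Finset (Fin n),
      B (ρ (prodE Q eB K) v0) (ρ (prodE Q eB J) v0) ≠ 0 →
        K ∩ J = ∅ ∧ K ∪ J = Finset.univ) ∧
    B v0 (ρ (prodE Q eB Finset.univ) v0) ≠ 0 := by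
  classical
  -- polar form computation
  have hpol : ∀ v w : V, QuadraticMap.polar Q v w = g v w + g w v := by
    intro v w
    simp only [QuadraticMap.polar, hQ, map_add, LinearMap.add_apply]
    ring
  -- basic Clifford relations
  have hxx : ∀ a b, ι Q (eB a) * ι Q (eB b) = - (ι Q (eB b) * ι Q (eB a)) := by
    intro a b
    have h := ι_mul_ι_add_swap (Q := Q) (eB a) (eB b)
    rw [hpol, hee, hee, add_zero, map_zero] at h
    exact eq_neg_of_add_eq_zero_left h
  have hxsq : ∀ a, ι Q (eB a) * ι Q (eB a) = 0 := by
    intro a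
    rw [ι_sq_scalar, hQ, hee, map_zero]
  have hyx : ∀ a b, ι Q (iB a) * ι Q (eB b)
      = algebraMap k _ (if b = a then 1 else 0) - ι Q (eB b) * ι Q (iB a) := by
    intro a b
    have h := ι_mul_ι_add_swap (Q := Q) (iB a) (eB b)
    have hp : QuadraticMap.polar Q (iB a) (eB b) = if b = a then 1 else 0 := by
      rw [hpol, hsymm (iB a) (eB b), hei, ← two_mul]
      by_cases hba : b = a
      · rw [if_pos hba, if_pos hba, mul_inv_cancel₀ h2]
      · rw [if_neg hba, if_neg hba, mul_zero]
    rw [hp] at h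
    exact eq_sub_of_add_eq h
  have hv0eq : ∀ a, ρ (ι Q (iB a)) (ρ (ι Q (eB a)) v0) = v0 := by
    intro a
    have h := congrArg (fun c => ρ c v0) (hyx a a)
    simp only [map_sub, map_mul, LinearMap.sub_apply,
      Module.End.mul_apply, AlgEquiv.commutes, Module.algebraMap_end_apply,
      eq_self_iff_true, if_true, one_smul] at h
    rw [h, hv0, map_zero, sub_zero]
  have hBe : ∀ (a : Fin n) (φ ψ : S),
      B (ρ (ι Q (eB a)) φ) ψ = B φ (ρ (ι Q (eB a)) ψ) := fun a => hB (eB a)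
  have hBi : ∀ (a : Fin n) (φ ψ : S),
      B (ρ (ι Q (iB a)) φ) ψ = B φ (ρ (ι Q (iB a)) ψ) := fun a => hB (iB a)
  constructor
  · -- part 1
    intro K J hKJ
    set LK := K.sort (· ≤ ·) with hLK
    set LJ := J.sort (· ≤ ·) with hLJ
    have hb : B v0 (ρ (xp Q eB (LK.reverse ++ LJ)) v0) ≠ 0 := by
      rw [← Bmove Q eB ρ v0 B hBe LK LJ]
      exact hKJ
    have hnodup : (LK.reverse ++ LJ).Nodup := by
      by_contra h
      apply hb
      rw [dupZero Q eB hxx hxsq _ h, map_zero]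
      simp
    have hmem : ∀ a : Fin n, a ∈ LK.reverse ++ LJ := by
      intro a
      by_contra h
      exact hb (missZero Q eB iB ρ v0 hyx hv0 B hv0eq hBi _ a h)
    constructor
    · apply Finset.eq_empty_iff_forall_notMem.mpr
      intro a ha
      rw [Finset.mem_inter] at ha
      rcases List.nodup_append.mp hnodup with ⟨_, _, hdisj⟩
      exact hdisj a (List.mem_reverse.mpr (Finset.mem_sort _ |>.mpr ha.1))
        a (Finset.mem_sort _ |>.mpr ha.2) rfl
    · apply Finset.eq_univ_iff_forall.mpr
      intro a
      rcases List.mem_append.mp (hmem a) with h | h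
      · exact Finset.mem_union_left _ (Finset.mem_sort _ |>.mp (List.mem_reverse.mp h))
      · exact Finset.mem_union_right _ (Finset.mem_sort _ |>.mp h)
  · -- part 2
    intro hzero
    -- every spinor norm `B v0 (ρ (xp L) v0)` vanishes
    have allL : ∀ L : List (Fin n), B v0 (ρ (xp Q eB L) v0) = 0 := by
      intro L
      by_cases hnd : L.Nodup
      · by_cases hcov : ∀ a : Fin n, a ∈ L
        · have hperm : L.Perm (Finset.univ.sort (· ≤ ·)) :=
            List.perm_of_nodup_nodup_toFinset_eq hnd (Finset.sort_nodup _ _)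
              (by
                ext a
                simp [List.mem_toFinset, Finset.mem_sort, hcov a])
          have hz' : B v0 (ρ (xp Q eB (Finset.univ.sort (· ≤ ·))) v0) = 0 := by
            rw [← prodE_eq]; exact hzero
          rcases permSign Q eB hxx hperm with h | h
          · rw [h]; exact hz'
          · rw [h, map_neg]
            simp only [LinearMap.neg_apply, map_neg]
            rw [hz', neg_zero]
        · push_neg at hcov
          obtain ⟨a, ha⟩ := hcov
          exact missZero Q eB iB ρ v0 hyx hv0 B hv0eq hBi L a ha
      · rw [dupZero Q eB hxx hxsq L hnd, map_zero]
        simp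
    -- the span of the `ρ (xp L) v0` is all of `S`
    set W : Submodule k S :=
      Submodule.span k (Set.range fun L : List (Fin n) => ρ (xp Q eB L) v0) with hW
    have hv0W : v0 ∈ W := by
      apply Submodule.subset_span
      refine ⟨[], ?_⟩
      show ρ (xp Q eB []) v0 = v0
      rw [xp_nil, map_one]; rfl
    have hEclosed : ∀ (a : Fin n) (w : S), w ∈ W → ρ (ι Q (eB a)) w ∈ W := by
      intro a w hw
      induction hw using Submodule.span_induction with
      | mem x hx =>
        obtain ⟨L, rfl⟩ := hx
        exact Submodule.subset_span ⟨a :: L, rxp_cons Q eB ρ v0 a L⟩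
      | zero => rw [map_zero]; exact Submodule.zero_mem _
      | add x y hx hy ihx ihy => rw [map_add]; exact Submodule.add_mem _ ihx ihy
      | smul c x hx ihx => rw [map_smul]; exact Submodule.smul_mem _ _ ihx
    have hIclosed0 : ∀ (a : Fin n) (L : List (Fin n)),
        ρ (ι Q (iB a)) (ρ (xp Q eB L) v0) ∈ W := by
      intro a L
      induction L with
      | nil =>
        have h1 : ρ (xp Q eB []) v0 = v0 := by rw [xp_nil, map_one]; rfl
        rw [h1, hv0]
        exact Submodule.zero_mem _
      | cons b L ih =>
        have e1 : ι Q (iB a) * xp Q eB (b :: L)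
            = algebraMap k _ (if b = a then 1 else 0) * xp Q eB L
              - ι Q (eB b) * (ι Q (iB a) * xp Q eB L) := by
          rw [xp_cons, ← mul_assoc, hyx a b, sub_mul, mul_assoc]
        have e2 : ρ (ι Q (iB a)) (ρ (xp Q eB (b :: L)) v0)
            = (if b = a then (1:k) else 0) • (ρ (xp Q eB L) v0)
              - ρ (ι Q (eB b)) (ρ (ι Q (iB a)) (ρ (xp Q eB L) v0)) := by
          have h1 : ρ (ι Q (iB a)) (ρ (xp Q eB (b :: L)) v0)
              = ρ (ι Q (iB a) * xp Q eB (b :: L)) v0 := by rw [map_mul]; rfl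
          rw [h1, e1]
          simp only [map_sub, map_mul, AlgEquiv.commutes,
            LinearMap.sub_apply, Module.End.mul_apply,
            Module.algebraMap_end_apply]
        rw [e2]
        exact Submodule.sub_mem _
          (Submodule.smul_mem _ _ (Submodule.subset_span ⟨L, rfl⟩))
          (hEclosed b _ ih)
    have hIclosed : ∀ (a : Fin n) (w : S), w ∈ W → ρ (ι Q (iB a)) w ∈ W := by
      intro a w hw
      induction hw using Submodule.span_induction with
      | mem x hx =>
        obtain ⟨L, rfl⟩ := hx
        exact hIclosed0 a L
      | zero => rw [map_zero]; exact Submodule.zero_mem _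
      | add x y hx hy ihx ihy => rw [map_add]; exact Submodule.add_mem _ ihx ihy
      | smul c x hx ihx => rw [map_smul]; exact Submodule.smul_mem _ _ ihx
    have hVclosed : ∀ (v : V) (w : S), w ∈ W → ρ (ι Q v) w ∈ W := by
      intro v
      have hv : v ∈ Submodule.span k (Set.range iB ∪ Set.range eB) := by
        rw [hspan]; exact Submodule.mem_top
      induction hv using Submodule.span_induction with
      | mem x hx =>
        rcases hx with ⟨a, rfl⟩ | ⟨a, rfl⟩
        · exact hIclosed a
        · exact hEclosed a
      | zero =>
        intro w hw
        rw [map_zero, map_zero]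
        exact Submodule.zero_mem _
      | add x y hx hy ihx ihy =>
        intro w hw
        rw [map_add, map_add, LinearMap.add_apply]
        exact Submodule.add_mem _ (ihx w hw) (ihy w hw)
      | smul c x hx ihx =>
        intro w hw
        rw [map_smul, map_smul, LinearMap.smul_apply]
        exact Submodule.smul_mem _ _ (ihx w hw)
    have hAclosed : ∀ (c : CliffordAlgebra Q) (w : S), w ∈ W → ρ c w ∈ W := by
      intro c
      induction c using CliffordAlgebra.induction with
      | algebraMap r =>
        intro w hw
        rw [AlgEquiv.commutes, Module.algebraMap_end_apply]
        exact Submodule.smul_mem _ _ hw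
      | ι v => exact hVclosed v
      | mul x y ihx ihy =>
        intro w hw
        rw [map_mul, Module.End.mul_apply]
        exact ihx _ (ihy w hw)
      | add x y ihx ihy =>
        intro w hw
        rw [map_add, LinearMap.add_apply]
        exact Submodule.add_mem _ (ihx w hw) (ihy w hw)
    have hall : ∀ ψ : S, ψ ∈ W := by
      intro ψ
      obtain ⟨ψ0, hψ0⟩ : ∃ ψ0, B v0 ψ0 ≠ 0 := by
        by_contra h
        push_neg at h
        exact hv0ne (hBndl v0 h)
      obtain ⟨c, hc⟩ := ρ.surjective
        ((B.flip ψ0).smulRight ((B v0 ψ0)⁻¹ • ψ))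
      have hcv : ρ c v0 = ψ := by
        rw [hc]
        simp only [LinearMap.smulRight_apply, LinearMap.flip_apply]
        rw [smul_comm, smul_smul, inv_mul_cancel₀ hψ0, one_smul]
      rw [← hcv]
      exact hAclosed c v0 hv0W
    have hBall : ∀ ψ : S, B v0 ψ = 0 := by
      intro ψ
      have hψ := hall ψ
      induction hψ using Submodule.span_induction with
      | mem x hx =>
        obtain ⟨L, rfl⟩ := hx
        exact allL L
      | zero => rw [map_zero]
      | add x y hx hy ihx ihy => rw [map_add, ihx, ihy, add_zero]
      | smul c x hx ihx => rw [map_smul, ihx, smul_zero]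
    exact hv0ne (hBndl v0 hBall)
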